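/- Let X be a separable Banach space with topological dual X*, and let Y be a topological space. Suppose F : X* → Y is sequentially continuous with respect to the weak-star topology on X*, i.e. whenever a sequence (xₙ*) in X* converges weak-star to x* (meaning xₙ*(x) → x*(x) for every x ∈ X), then F(xₙ*) → F(x*) in Y. Then F is measurable from (X*, Borel σ-field of the weak-star topology) to (Y, Borel σ-field generated by the open sets of Y). -/
import Mathlib

open Filter

/-- If `X` is a separable Banach space and `F : X* → Y` is sequentially continuous from the
weak-star topology on the dual `X*` to a topological space `Y`, then `F` is measurable from
the Borel σ-field of the weak-star topology to the Borel σ-field of `Y`. -/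
theorem weakstar_sequentially_continuous_measurable
    {X : Type*} [NormedAddCommGroup X] [NormedSpace ℝ X] [CompleteSpace X]
    [TopologicalSpace.SeparableSpace X]
    {Y : Type*} [TopologicalSpace Y]
    (F : WeakDual ℝ X → Y)
    (hF : ∀ (φ : WeakDual ℝ X) (φs : ℕ → WeakDual ℝ X),
      (∀ x : X, Tendsto (fun n => φs n x) atTop (nhds (φ x))) →
      Tendsto (fun n => F (φs n)) atTop (nhds (F φ))) :
    @Measurable (WeakDual ℝ X) Y (borel (WeakDual ℝ X)) (borel Y) F := by
  letI : MeasurableSpace (WeakDual ℝ X) := borel (WeakDual ℝ X)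
  haveI : BorelSpace (WeakDual ℝ X) := ⟨rfl⟩
  -- a dense sequence in X
  obtain ⟨u, hu⟩ := TopologicalSpace.exists_dense_seq X
  -- the closed balls
  set S : ℕ → Set (WeakDual ℝ X) :=
    fun n => (fun φ : WeakDual ℝ X => WeakDual.toStrongDual φ) ⁻¹' Metric.closedBall 0 (n : ℝ) with hS
  have hSclosed : ∀ n, IsClosed (S n) := fun n => WeakDual.isClosed_closedBall 0 n
  have hScompact : ∀ n, IsCompact (S n) := fun n => WeakDual.isCompact_closedBall (𝕜 := ℝ) 0 n
  -- each ball, as a subtype, is compact and metrizable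
  have key : ∀ (n : ℕ) (U : Set Y), IsOpen U →
      ∃ V : Set (WeakDual ℝ X), IsOpen V ∧ F ⁻¹' U ∩ S n = V ∩ S n := by
    intro n U hU
    haveI : CompactSpace (S n) := isCompact_iff_compactSpace.mp (hScompact n)
    -- embed the ball into ℕ → ℝ
    set e : S n → (ℕ → ℝ) := fun φ k => (φ : WeakDual ℝ X) (u k) with he
    have hecont : Continuous e := by
      refine continuous_pi fun k => ?_
      exact (WeakDual.eval_continuous (u k)).comp continuous_subtype_val
    have heinj : Function.Injective e := by
      intro φ ψ h
      apply Subtype.ext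
      have h' : Set.EqOn (φ : WeakDual ℝ X) (ψ : WeakDual ℝ X) (Set.range u) := by
        rintro _ ⟨k, rfl⟩
        exact congrFun h k
      have := Continuous.ext_on hu
        (map_continuous (φ : WeakDual ℝ X)) (map_continuous (ψ : WeakDual ℝ X)) h'
      exact DFunLike.coe_injective this
    have hemb := hecont.isClosedEmbedding heinj
    haveI : TopologicalSpace.PseudoMetrizableSpace (S n) :=
      hemb.isEmbedding.isInducing.pseudoMetrizableSpace
    -- the restriction of F to the ball is sequentially continuous, hence continuous
    have hcont : Continuous fun φ : S n => F (φ : WeakDual ℝ X) := by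
      apply SeqContinuous.continuous
      intro ψ ψ₀ hψ
      refine hF _ _ fun x => ?_
      have : Tendsto (fun m => (ψ m : WeakDual ℝ X)) atTop (nhds (ψ₀ : WeakDual ℝ X)) :=
        (continuous_subtype_val.tendsto _).comp hψ
      exact ((WeakDual.eval_continuous x).tendsto _).comp this
    have hopen : IsOpen ((fun φ : S n => F (φ : WeakDual ℝ X)) ⁻¹' U) := hU.preimage hcont
    rw [isOpen_induced_iff] at hopen
    obtain ⟨V, hVopen, hVeq⟩ := hopen
    refine ⟨V, hVopen, ?_⟩
    ext φ
    simp only [Set.mem_inter_iff, Set.mem_preimage]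
    constructor
    · rintro ⟨hφU, hφS⟩
      refine ⟨?_, hφS⟩
      have := hVeq ▸ (show (⟨φ, hφS⟩ : S n) ∈ (fun φ : S n => F (φ : WeakDual ℝ X)) ⁻¹' U from hφU)
      exact this
    · rintro ⟨hφV, hφS⟩
      refine ⟨?_, hφS⟩
      have : (⟨φ, hφS⟩ : S n) ∈ Subtype.val ⁻¹' V := hφV
      rw [hVeq] at this
      exact this
  -- conclude measurability
  rw [show (borel Y) = MeasurableSpace.generateFrom {s : Set Y | IsOpen s} from rfl]
  refine measurable_generateFrom fun U hU => ?_
  have hcover : F ⁻¹' U = ⋃ n : ℕ, F ⁻¹' U ∩ S n := by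
    ext φ
    simp only [Set.mem_iUnion, Set.mem_inter_iff, Set.mem_preimage]
    constructor
    · intro h
      obtain ⟨n, hn⟩ := exists_nat_ge ‖WeakDual.toStrongDual φ‖
      exact ⟨n, h, by simp only [hS, Set.mem_preimage, Metric.mem_closedBall, dist_zero_right]; exact hn⟩
    · rintro ⟨n, h, _⟩; exact h
  rw [hcover]
  refine MeasurableSet.iUnion fun n => ?_
  obtain ⟨V, hVopen, hVeq⟩ := key n U hU
  rw [hVeq]
  exact hVopen.measurableSet.inter (hSclosed n).measurableSet
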